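/- The asymptotic proportion of terms of the sequence u_k = sin(2π{√k}) falling in [−1/2, 1/2] is 1/3; that is, (1/n)·#{k ∈ ℕ : 1 ≤ k ≤ n and −1/2 ≤ sin(2π{√k}) ≤ 1/2} tends to 1/3 as n → ∞. -/

import Mathlib

open Filter Topology Real Finset

def natQ (m d : ℕ) : Prop :=
  6*d ≤ m ∨ (5*m+2 ≤ 6*d ∧ 6*d ≤ 7*m+2) ∨ 11*m+6 ≤ 6*d

instance : ∀ m d, Decidable (natQ m d) := fun m d => by unfold natQ; infer_instance

def natCond (k : ℕ) : Prop := natQ (Nat.sqrt k) (k - Nat.sqrt k * Nat.sqrt k)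

instance : DecidablePred natCond := fun k => by unfold natCond; infer_instance

def blkc (m : ℕ) : ℕ := ((Finset.range (2*m+1)).filter (natQ m)).card

lemma blkc_bound (m : ℕ) : 2*m ≤ 3 * blkc m + 12 ∧ 3 * blkc m ≤ 2*m + 12 := by
  have hsplit : (Finset.range (2*m+1)).filter (natQ m) =
      ((Finset.range (2*m+1)).filter (fun d => 6*d ≤ m)) ∪
      (((Finset.range (2*m+1)).filter (fun d => 5*m+2 ≤ 6*d ∧ 6*d ≤ 7*m+2)) ∪
       ((Finset.range (2*m+1)).filter (fun d => 11*m+6 ≤ 6*d))) := by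
    rw [← Finset.filter_or, ← Finset.filter_or]
    rfl
  have h1 : (Finset.range (2*m+1)).filter (fun d => 6*d ≤ m) = Finset.Icc 0 (m/6) := by
    ext d; simp only [Finset.mem_filter, Finset.mem_range, Finset.mem_Icc]; omega
  have h2 : (Finset.range (2*m+1)).filter (fun d => 5*m+2 ≤ 6*d ∧ 6*d ≤ 7*m+2)
      = Finset.Icc ((5*m+7)/6) ((7*m+2)/6) := by
    ext d; simp only [Finset.mem_filter, Finset.mem_range, Finset.mem_Icc]; omega
  have h3 : (Finset.range (2*m+1)).filter (fun d => 11*m+6 ≤ 6*d) = Finset.Icc ((11*m+11)/6) (2*m) := by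
    ext d; simp only [Finset.mem_filter, Finset.mem_range, Finset.mem_Icc]; omega
  have hd23 : Disjoint ((Finset.range (2*m+1)).filter (fun d => 5*m+2 ≤ 6*d ∧ 6*d ≤ 7*m+2))
      ((Finset.range (2*m+1)).filter (fun d => 11*m+6 ≤ 6*d)) := by
    rw [Finset.disjoint_left]
    intro a ha hb
    simp only [Finset.mem_filter, Finset.mem_range] at ha hb; omega
  have hd1 : Disjoint ((Finset.range (2*m+1)).filter (fun d => 6*d ≤ m))
      (((Finset.range (2*m+1)).filter (fun d => 5*m+2 ≤ 6*d ∧ 6*d ≤ 7*m+2)) ∪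
       ((Finset.range (2*m+1)).filter (fun d => 11*m+6 ≤ 6*d))) := by
    rw [Finset.disjoint_left]
    intro a ha hb
    simp only [Finset.mem_filter, Finset.mem_range, Finset.mem_union] at ha hb; omega
  have hc : blkc m = (m/6 + 1 - 0) + (((7*m+2)/6 + 1 - (5*m+7)/6) + (2*m + 1 - (11*m+11)/6)) := by
    rw [blkc, hsplit, Finset.card_union_of_disjoint hd1, Finset.card_union_of_disjoint hd23,
      h1, h2, h3, Nat.card_Icc, Nat.card_Icc, Nat.card_Icc]
  rw [hc]; omega

lemma block_card (m : ℕ) :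
    ((Finset.Ico (m*m) ((m+1)*(m+1))).filter natCond).card = blkc m := by
  have hN : (m+1)*(m+1) = m*m + (2*m+1) := by ring
  have he : Finset.Ico (m*m) ((m+1)*(m+1)) =
      (Finset.range (2*m+1)).map (addLeftEmbedding (m*m)) := by
    rw [hN, Finset.range_eq_Ico, Finset.map_add_left_Ico]
    norm_num
  rw [he, Finset.filter_map, Finset.card_map, blkc]
  apply congrArg
  apply Finset.filter_congr
  intro d hd
  simp only [Finset.mem_range] at hd
  simp only [Function.comp_apply, addLeftEmbedding_apply]
  unfold natCond
  rw [Nat.sqrt_add_eq m (by omega), Nat.add_sub_cancel_left]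

lemma cum_card (t : ℕ) :
    ((Finset.Ico 0 (t*t)).filter natCond).card = ∑ m ∈ Finset.range t, blkc m := by
  induction t with
  | zero => simp
  | succ t ih =>
    have hu : Finset.Ico 0 ((t+1)*(t+1)) = Finset.Ico 0 (t*t) ∪ Finset.Ico (t*t) ((t+1)*(t+1)) := by
      rw [Finset.Ico_union_Ico_eq_Ico (by omega) (by nlinarith)]
    rw [hu, Finset.filter_union, Finset.card_union_of_disjoint, ih, block_card,
      Finset.sum_range_succ]
    exact Finset.disjoint_filter_filter (Finset.Ico_disjoint_Ico_consecutive 0 (t*t) ((t+1)*(t+1)))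

lemma cum_bound (t : ℕ) :
    t*t ≤ 3 * (∑ m ∈ Finset.range t, blkc m) + 13*t ∧
    3 * (∑ m ∈ Finset.range t, blkc m) ≤ t*t + 13*t := by
  induction t with
  | zero => simp
  | succ t ih =>
    rw [Finset.sum_range_succ]
    have hb := blkc_bound t
    constructor
    · nlinarith [ih.1]
    · nlinarith [ih.2]

lemma aux_sin_le_half {x : ℝ} (hx : x ∈ Set.Icc (-(π/2)) (π/2)) :
    (-(1/2 : ℝ) ≤ Real.sin x ∧ Real.sin x ≤ 1/2) ↔ (-(π/6) ≤ x ∧ x ≤ π/6) := by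
  have hpi := Real.pi_pos
  have h6 : (π/6 : ℝ) ∈ Set.Icc (-(π/2)) (π/2) := by constructor <;> nlinarith
  have h6' : (-(π/6) : ℝ) ∈ Set.Icc (-(π/2)) (π/2) := by constructor <;> nlinarith
  have e1 : Real.sin (π/6) = 1/2 := Real.sin_pi_div_six
  have e2 : Real.sin (-(π/6)) = -(1/2) := by rw [Real.sin_neg, e1]
  constructor
  · rintro ⟨h1, h2⟩
    constructor
    · by_contra h; push_neg at h
      have := Real.strictMonoOn_sin hx h6' h
      rw [e2] at this; linarith
    · by_contra h; push_neg at h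
      have := Real.strictMonoOn_sin h6 hx h
      rw [e1] at this; linarith
  · rintro ⟨h1, h2⟩
    constructor
    · rw [← e2]; exact Real.strictMonoOn_sin.monotoneOn h6' hx h1
    · rw [← e1]; exact Real.strictMonoOn_sin.monotoneOn hx h6 h2

lemma aux_fract_sin (f : ℝ) (h0 : 0 ≤ f) (h1 : f < 1) :
    (-(1/2 : ℝ) ≤ Real.sin (2*π*f) ∧ Real.sin (2*π*f) ≤ 1/2) ↔
      (f ≤ 1/12 ∨ (5/12 ≤ f ∧ f ≤ 7/12) ∨ 11/12 ≤ f) := by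
  have hpi := Real.pi_pos
  rcases le_or_gt f (1/4) with hc | hc
  · rw [aux_sin_le_half (by constructor <;> nlinarith)]
    constructor
    · rintro ⟨-, h⟩; left; nlinarith
    · rintro (h | ⟨h, -⟩ | h) <;> constructor <;> nlinarith
  · rcases le_or_gt f (3/4) with hc2 | hc2
    · rw [show (2*π*f) = π - (π - 2*π*f) by ring, Real.sin_pi_sub,
        aux_sin_le_half (by constructor <;> nlinarith)]
      constructor
      · rintro ⟨ha, hb⟩; right; left; constructor <;> nlinarith
      · rintro (h | ⟨ha, hb⟩ | h) <;> first
          | (constructor <;> nlinarith)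
    · rw [show (2*π*f) = (2*π*f - 2*π) + 2*π by ring, Real.sin_add_two_pi,
        aux_sin_le_half (by constructor <;> nlinarith)]
      constructor
      · rintro ⟨ha, hb⟩; right; right; nlinarith
      · rintro (h | ⟨ha, hb⟩ | h) <;> constructor <;> nlinarith

lemma cond_iff (k : ℕ) :
    (-(1 / 2 : ℝ) ≤ Real.sin (2 * π * Int.fract (Real.sqrt k)) ∧
      Real.sin (2 * π * Int.fract (Real.sqrt k)) ≤ 1 / 2) ↔ natCond k := by
  set m := Nat.sqrt k with hm
  have hk0 : (0:ℝ) ≤ (k:ℝ) := by positivity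
  have hmk : m * m ≤ k := by have := Nat.sqrt_le' k; simpa [pow_two] using this
  have hlow : (m:ℝ) ≤ Real.sqrt k := Real.nat_sqrt_le_real_sqrt
  have hhigh : Real.sqrt k < m + 1 := Real.real_sqrt_lt_nat_sqrt_succ
  have hfr : Int.fract (Real.sqrt k) = Real.sqrt k - m := by
    rw [Int.fract, Real.floor_real_sqrt_eq_nat_sqrt]
    norm_num
    exact hm.symm
  rw [hfr, aux_fract_sin _ (by linarith) (by linarith)]
  have key : ∀ a : ℕ, ((Real.sqrt k ≤ m + (a:ℝ)/12) ↔ (144 * k ≤ 144*(m*m) + 24*a*m + a*a)) := by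
    intro a
    rw [Real.sqrt_le_left (by positivity),
      show ((m:ℝ) + a/12)^2 = ((144*(m*m) + 24*a*m + a*a : ℕ) : ℝ)/144 by push_cast; ring,
      le_div_iff₀ (by norm_num : (0:ℝ) < 144),
      show (k:ℝ) * 144 = ((144*k : ℕ) : ℝ) by push_cast; ring,
      Nat.cast_le]
  have key2 : ∀ a : ℕ, (((m:ℝ) + (a:ℝ)/12 ≤ Real.sqrt k) ↔ (144*(m*m) + 24*a*m + a*a ≤ 144 * k)) := by
    intro a
    rw [Real.le_sqrt (by positivity) hk0,
      show ((m:ℝ) + a/12)^2 = ((144*(m*m) + 24*a*m + a*a : ℕ) : ℝ)/144 by push_cast; ring,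
      div_le_iff₀ (by norm_num : (0:ℝ) < 144),
      show (k:ℝ) * 144 = ((144*k : ℕ) : ℝ) by push_cast; ring,
      Nat.cast_le]
  have h1 : (Real.sqrt k - m ≤ 1/12) ↔ 144 * k ≤ 144*(m*m) + 24*1*m + 1*1 := by
    rw [← key 1]; push_cast; constructor <;> intro <;> linarith
  have h2 : ((5:ℝ)/12 ≤ Real.sqrt k - m) ↔ 144*(m*m) + 24*5*m + 5*5 ≤ 144 * k := by
    rw [← key2 5]; push_cast; constructor <;> intro <;> linarith
  have h3 : (Real.sqrt k - m ≤ 7/12) ↔ 144 * k ≤ 144*(m*m) + 24*7*m + 7*7 := by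
    rw [← key 7]; push_cast; constructor <;> intro <;> linarith
  have h4 : ((11:ℝ)/12 ≤ Real.sqrt k - m) ↔ 144*(m*m) + 24*11*m + 11*11 ≤ 144 * k := by
    rw [← key2 11]; push_cast; constructor <;> intro <;> linarith
  rw [h1, h2, h3, h4]
  unfold natCond natQ
  rw [← hm]
  clear_value m
  clear hk0 hlow hhigh hfr key key2 h1 h2 h3 h4 hm
  revert hmk
  generalize m*m = s
  intro hmk
  omega

lemma main_bound (n : ℕ) :
    n ≤ 3 * ((Finset.Icc 1 n).filter natCond).card + 15 * Nat.sqrt n + 14 ∧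
    3 * ((Finset.Icc 1 n).filter natCond).card ≤ n + 15 * Nat.sqrt n + 14 := by
  set M := Nat.sqrt n with hM
  set c := ((Finset.Icc 1 n).filter natCond).card with hc
  have hins : (Finset.Ico 0 (n+1)).filter natCond = insert 0 ((Finset.Icc 1 n).filter natCond) := by
    have h1 : Finset.Ico 0 (n+1) = insert 0 (Finset.Icc 1 n) := by
      ext x; simp only [Finset.mem_Ico, Finset.mem_insert, Finset.mem_Icc]; omega
    rw [h1, Finset.filter_insert, if_pos (by decide)]
  have h0mem : 0 ∉ (Finset.Icc 1 n).filter natCond := by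
    simp
  have hcard0 : ((Finset.Ico 0 (n+1)).filter natCond).card = c + 1 := by
    rw [hins, Finset.card_insert_of_notMem h0mem]
  have hsq1 : M * M ≤ n := by have := Nat.sqrt_le' n; simpa [pow_two] using this
  have hsq2 : n < (M+1) * (M+1) := by have := Nat.lt_succ_sqrt' n; simpa [pow_two, Nat.succ_eq_add_one] using this
  have hlo : ((Finset.Ico 0 (M*M)).filter natCond).card ≤ c + 1 := by
    rw [← hcard0]
    exact Finset.card_le_card (Finset.filter_subset_filter _ (Finset.Ico_subset_Ico le_rfl (by omega)))
  have hhi : c + 1 ≤ ((Finset.Ico 0 ((M+1)*(M+1))).filter natCond).card := by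
    rw [← hcard0]
    exact Finset.card_le_card (Finset.filter_subset_filter _ (Finset.Ico_subset_Ico le_rfl (by omega)))
  rw [cum_card] at hlo hhi
  have hb1 := cum_bound M
  have hb2 := cum_bound (M+1)
  have hmono : (∑ m ∈ Finset.range M, blkc m) ≤ ∑ m ∈ Finset.range (M+1), blkc m := by
    rw [Finset.sum_range_succ]; omega
  have hN : (M+1)*(M+1) = M*M + 2*M + 1 := by ring
  omega


/-- The asymptotic proportion of `k ≤ n` with `sin(2π{√k}) ∈ [−1/2, 1/2]` is `1/3`. -/
theorem proportion_sin_two_pi_fract_sqrt_in_Icc :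
    Tendsto
      (fun n : ℕ =>
        (((Finset.Icc 1 n).filter fun k : ℕ =>
            -(1 / 2 : ℝ) ≤ Real.sin (2 * π * Int.fract (Real.sqrt k)) ∧
            Real.sin (2 * π * Int.fract (Real.sqrt k)) ≤ 1 / 2).card : ℝ) / n)
      atTop (𝓝 (1 / 3)) := by
  have cond_iff : ∀ k : ℕ,
      (-(1 / 2 : ℝ) ≤ Real.sin (2 * π * Int.fract (Real.sqrt k)) ∧
        Real.sin (2 * π * Int.fract (Real.sqrt k)) ≤ 1 / 2) ↔ natCond k := by
    exact fun k => cond_iff k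
  have hfe : (fun n : ℕ =>
        (((Finset.Icc 1 n).filter fun k : ℕ =>
            -(1 / 2 : ℝ) ≤ Real.sin (2 * π * Int.fract (Real.sqrt k)) ∧
            Real.sin (2 * π * Int.fract (Real.sqrt k)) ≤ 1 / 2).card : ℝ) / n)
      = fun n : ℕ => ((((Finset.Icc 1 n).filter natCond).card : ℝ) / n) := by
    funext n
    rw [Finset.filter_congr fun k _ => cond_iff k]
  rw [hfe, ← tendsto_sub_nhds_zero_iff]
  have l1 : Tendsto (fun n : ℕ => ((n : ℝ))⁻¹) atTop (𝓝 0) :=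
    tendsto_inv_atTop_nhds_zero_nat
  have l2 : Tendsto (fun n : ℕ => (Real.sqrt (n : ℝ))⁻¹) atTop (𝓝 0) := by
    have := (Real.continuous_sqrt.tendsto 0).comp l1
    simpa [Function.comp_def, Real.sqrt_inv] using this
  apply squeeze_zero_norm'
    (a := fun n : ℕ => 5 * (Real.sqrt (n : ℝ))⁻¹ + (14/3) * ((n : ℝ))⁻¹)
  · filter_upwards [eventually_ge_atTop 1] with n hn
    have hn0 : (0:ℝ) < n := by exact_mod_cast hn
    have hs : (0:ℝ) < Real.sqrt n := Real.sqrt_pos.2 hn0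
    have hss : Real.sqrt n * Real.sqrt n = n := Real.mul_self_sqrt hn0.le
    set c := ((Finset.Icc 1 n).filter natCond).card with hcdef
    have hmb := main_bound n
    have hMr : ((Nat.sqrt n : ℕ) : ℝ) ≤ Real.sqrt n := Real.nat_sqrt_le_real_sqrt
    have habs : |3 * (c:ℝ) - n| ≤ 15 * Real.sqrt n + 14 := by
      rw [abs_le]
      have h1 : (n:ℝ) ≤ 3*c + 15*(Nat.sqrt n : ℝ) + 14 := by exact_mod_cast hmb.1
      have h2 : 3*(c:ℝ) ≤ n + 15*(Nat.sqrt n : ℝ) + 14 := by exact_mod_cast hmb.2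
      constructor <;> [linarith; linarith]
    have heq : (c:ℝ)/n - 1/3 = (3*(c:ℝ) - n)/(3*n) := by
      field_simp
    rw [Real.norm_eq_abs, heq, abs_div, abs_of_pos (show (0:ℝ) < 3*(n:ℝ) by positivity),
      div_le_iff₀ (by positivity)]
    have hkey : (Real.sqrt n)⁻¹ * n = Real.sqrt n := by
      rw [← hss]; field_simp; rw [Real.sqrt_sq hs.le]
    calc |3*(c:ℝ) - n| ≤ 15 * Real.sqrt n + 14 := habs
      _ = (5 * (Real.sqrt ↑n)⁻¹ + 14/3 * (↑n)⁻¹) * (3 * ↑n) := by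
          rw [show (5 * (Real.sqrt ↑n)⁻¹ + 14/3 * (↑n)⁻¹) * (3 * ↑n)
              = 15 * ((Real.sqrt ↑n)⁻¹ * n) + 14 * ((↑n)⁻¹ * ↑n) by ring,
            hkey, inv_mul_cancel₀ (ne_of_gt hn0)]
          ring
  · have := (l2.const_mul 5).add (l1.const_mul (14/3))
    simpa using this
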